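/- Let d ≥ 1, let a₁,…,a_d be integers with aᵢ ≥ 1, let x₁,…,x_d ∈ ℂ, and let 0 < α < 1 be such that |x_j·x_{j+1}⋯x_d| ≤ α for every j = 1,…,d. Then the family (k₁,…,k_d) ↦ ∏_{i=1}^d x_i^{k_i}/k_i^{a_i}, indexed by strictly increasing d-tuples of positive integers 0 < k₁ < ⋯ < k_d, is absolutely summable, and for every integer N ≥ 1 the truncated sum satisfies | ∑_{0<k₁<⋯<k_d≤N} ∏_{i=1}^d x_i^{k_i}/k_i^{a_i} | ≤ ∑_{n=1}^N n^{d−1}·αⁿ. -/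

import Mathlib

set_option maxHeartbeats 1000000

private lemma prod_Ici_succ {M : Type*} [CommMonoid M] {d : ℕ} (b : Fin (d + 1) → M)
    (j : Fin d) :
    ∏ i ∈ Finset.Ici j, b i.succ = ∏ i ∈ Finset.Ici j.succ, b i := by
  refine Finset.prod_nbij' (fun i => i.succ)
    (fun i => ⟨i.val - 1, by have := j.isLt; have := i.isLt; omega⟩) ?_ ?_ ?_ ?_ ?_
  · intro i hi
    simp only [Finset.mem_Ici] at hi ⊢
    exact Fin.succ_le_succ_iff.mpr hi
  · intro i hi
    simp only [Finset.mem_Ici] at hi ⊢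
    have h1 : j.succ.val ≤ i.val := hi
    have h2 : j.val + 1 ≤ i.val := by simpa using h1
    show j.val ≤ i.val - 1
    omega
  · intro i _
    ext
    simp
  · intro i hi
    simp only [Finset.mem_Ici] at hi
    have h1 : j.succ.val ≤ i.val := hi
    have h2 : j.val + 1 ≤ i.val := by simpa using h1
    ext
    simp [Fin.val_succ]
    omega
  · intro i _; rfl

private lemma key_prod_bound : ∀ (d : ℕ) (b : Fin (d + 1) → ℝ), (∀ i, 0 ≤ b i) →
    ∀ (α : ℝ), 0 ≤ α → (∀ j, ∏ i ∈ Finset.Ici j, b i ≤ α) →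
    ∀ (k : Fin (d + 1) → ℕ), StrictMono k →
    ∏ i, b i ^ k i ≤ α ^ k (Fin.last d) := by
  intro d
  induction d with
  | zero =>
    intro b hb α hα hprod k hk
    have h0 : b 0 ≤ α := by
      have := hprod 0
      have hIci : (Finset.Ici (0 : Fin 1)) = Finset.univ := by
        ext i; simp [Fin.zero_le]
      rw [hIci, Fin.prod_univ_one] at this
      exact this
    simpa using pow_le_pow_left₀ (hb 0) h0 (k 0)
  | succ d ih =>
    intro b hb α hα hprod k hk
    have hk0 : ∀ i, k 0 ≤ k i := fun i => hk.monotone (Fin.zero_le i)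
    have e1 : ∏ i, b i ^ k i = (∏ i, b i) ^ k 0 * ∏ i, b i ^ (k i - k 0) := by
      rw [← Finset.prod_pow, ← Finset.prod_mul_distrib]
      refine Finset.prod_congr rfl fun i _ => ?_
      rw [← pow_add, Nat.add_sub_cancel' (hk0 i)]
    have e2 : ∏ i, b i ^ (k i - k 0) = ∏ i : Fin (d + 1), b i.succ ^ (k i.succ - k 0) := by
      rw [Fin.prod_univ_succ]
      simp
    have huniv : ∏ i, b i ≤ α := by
      have := hprod 0
      have hIci : (Finset.Ici (0 : Fin (d + 2))) = Finset.univ := by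
        ext i; simp [Fin.zero_le]
      rwa [hIci] at this
    have h3 : (∏ i, b i) ^ k 0 ≤ α ^ k 0 :=
      pow_le_pow_left₀ (Finset.prod_nonneg fun i _ => hb i) huniv _
    have h4 : ∏ i : Fin (d + 1), b i.succ ^ (k i.succ - k 0)
        ≤ α ^ (k (Fin.last d).succ - k 0) := by
      refine ih (fun i => b i.succ) (fun i => hb _) α hα
        (fun j => by rw [prod_Ici_succ]; exact hprod _)
        (fun i => k i.succ - k 0) ?_
      intro i j hij
      have h1 := hk (show i.succ < j.succ from Fin.succ_lt_succ_iff.mpr hij)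
      have h2 := hk0 i.succ
      show k i.succ - k 0 < k j.succ - k 0
      omega
    calc ∏ i, b i ^ k i = (∏ i, b i) ^ k 0 * ∏ i : Fin (d + 1), b i.succ ^ (k i.succ - k 0) := by
          rw [e1, e2]
      _ ≤ α ^ k 0 * α ^ (k (Fin.last d).succ - k 0) := by
          refine mul_le_mul h3 h4 ?_ (pow_nonneg hα _)
          exact Finset.prod_nonneg fun i _ => pow_nonneg (hb _) _
      _ = α ^ k (Fin.last (d + 1)) := by
          rw [← pow_add, Nat.add_sub_cancel' (hk0 _), Fin.succ_last]

private lemma term_bound {d : ℕ} (a : Fin (d + 1) → ℕ) (x : Fin (d + 1) → ℂ) (α : ℝ)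
    (hα : 0 ≤ α) (hx : ∀ j, ‖∏ i ∈ Finset.Ici j, x i‖ ≤ α)
    (k : Fin (d + 1) → ℕ) (hpos : ∀ i, 0 < k i) (hk : StrictMono k) :
    ‖∏ i, x i ^ k i / (k i : ℂ) ^ a i‖ ≤ α ^ k (Fin.last d) := by
  have h1 : ‖∏ i, x i ^ k i / (k i : ℂ) ^ a i‖
      = ∏ i, ‖x i‖ ^ k i / (k i : ℝ) ^ a i := by
    rw [norm_prod]
    refine Finset.prod_congr rfl fun i _ => ?_
    rw [norm_div, norm_pow, norm_pow, Complex.norm_natCast]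
  rw [h1]
  calc ∏ i, ‖x i‖ ^ k i / (k i : ℝ) ^ a i
      ≤ ∏ i, ‖x i‖ ^ k i := by
        refine Finset.prod_le_prod (fun i _ => ?_) (fun i _ => ?_)
        · exact div_nonneg (pow_nonneg (norm_nonneg _) _)
            (pow_nonneg (Nat.cast_nonneg _) _)
        · refine div_le_self (pow_nonneg (norm_nonneg _) _) ?_
          have : 1 ≤ (k i) ^ a i := Nat.one_le_pow _ _ (hpos i)
          exact_mod_cast this
    _ ≤ α ^ k (Fin.last d) := by
        refine key_prod_bound d _ (fun i => norm_nonneg _) α hα (fun j => ?_) k hk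
        rw [← norm_prod]
        exact hx j

private lemma summable_pi_geom : ∀ (n : ℕ) (β : ℝ), 0 ≤ β → β < 1 →
    Summable (fun m : Fin n → ℕ => ∏ i, β ^ m i) := by
  intro n
  induction n with
  | zero =>
    intro β _ _
    exact Summable.of_finite
  | succ n ih =>
    intro β h0 h1
    have hgeo : Summable (fun m : ℕ => β ^ m) := summable_geometric_of_lt_one h0 h1
    have hprod : Summable (fun p : ℕ × (Fin n → ℕ) => β ^ p.1 * ∏ i, β ^ p.2 i) := by
      apply hgeo.mul_of_nonneg (ih β h0 h1)
      · exact fun m => pow_nonneg h0 _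
      · exact fun m => Finset.prod_nonneg fun i _ => pow_nonneg h0 _
    have hinj : Function.Injective
        (fun m : Fin (n + 1) → ℕ => ((m 0, fun i : Fin n => m i.succ) : ℕ × (Fin n → ℕ))) := by
      intro m m' h
      simp only [Prod.mk.injEq] at h
      funext i
      refine Fin.cases ?_ ?_ i
      · exact h.1
      · intro j; exact congrFun h.2 j
    have := hprod.comp_injective hinj
    refine this.congr fun m => ?_
    simp only [Function.comp_apply]
    rw [Fin.prod_univ_succ]

theorem multiple_polylogarithm_geometric_convergence
    (d : ℕ) (hd : 1 ≤ d) (a : Fin d → ℕ) (ha : ∀ i, 1 ≤ a i)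
    (x : Fin d → ℂ) (α : ℝ) (hα0 : 0 < α) (hα1 : α < 1)
    (hx : ∀ j : Fin d, ‖∏ i ∈ Finset.Ici j, x i‖ ≤ α)
    (N : ℕ) (hN : 1 ≤ N) :
    (Summable fun k : {k : Fin d → ℕ // (∀ i, 0 < k i) ∧ StrictMono k} =>
      ‖∏ i : Fin d, x i ^ k.1 i / (k.1 i : ℂ) ^ a i‖) ∧
    ‖(∑' k : {k : Fin d → ℕ // ((∀ i, 0 < k i) ∧ StrictMono k) ∧ ∀ i, k i ≤ N},
          ∏ i : Fin d, x i ^ k.1 i / (k.1 i : ℂ) ^ a i)‖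
      ≤ ∑ n ∈ Finset.Icc 1 N, (n : ℝ) ^ (d - 1) * α ^ n := by
  obtain ⟨e, rfl⟩ : ∃ e, d = e + 1 := ⟨d - 1, by omega⟩
  constructor
  · -- Summability
    set β : ℝ := α ^ ((e + 1 : ℝ))⁻¹ with hβdef
    have hβ0 : 0 ≤ β := Real.rpow_nonneg hα0.le _
    have hβ1 : β < 1 := Real.rpow_lt_one hα0.le hα1 (by positivity)
    have hG : Summable (fun m : Fin (e + 1) → ℕ => ∏ i, β ^ m i) :=
      summable_pi_geom (e + 1) β hβ0 hβ1
    have hGS : Summable ((fun m : Fin (e + 1) → ℕ => ∏ i, β ^ m i) ∘ Subtype.val :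
        {k : Fin (e + 1) → ℕ // (∀ i, 0 < k i) ∧ StrictMono k} → ℝ) :=
      hG.comp_injective Subtype.val_injective
    refine Summable.of_nonneg_of_le (fun k => norm_nonneg _) (fun k => ?_) hGS
    have hb := term_bound a x α hα0.le hx k.1 k.2.1 k.2.2
    refine hb.trans ?_
    -- α ^ (k last) ≤ ∏ β ^ k i
    have hsum : (∑ i, k.1 i) ≤ (e + 1) * k.1 (Fin.last e) := by
      calc ∑ i, k.1 i ≤ (Finset.univ : Finset (Fin (e + 1))).card • k.1 (Fin.last e) :=
            Finset.sum_le_card_nsmul _ _ _ (fun i _ => k.2.2.monotone (Fin.le_last i))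
        _ = (e + 1) * k.1 (Fin.last e) := by simp [mul_comm]
    have key : α ^ k.1 (Fin.last e) ≤ β ^ (∑ i, k.1 i) := by
      have h1 : β ^ (∑ i, k.1 i) = α ^ (((e + 1 : ℝ))⁻¹ * (∑ i, k.1 i : ℕ)) := by
        rw [hβdef, ← Real.rpow_natCast (α ^ ((e + 1 : ℝ))⁻¹) _, ← Real.rpow_mul hα0.le]
      have h2 : α ^ k.1 (Fin.last e) = α ^ ((k.1 (Fin.last e) : ℕ) : ℝ) := by
        rw [Real.rpow_natCast]
      rw [h1, h2]
      refine Real.rpow_le_rpow_of_exponent_ge hα0 hα1.le ?_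
      have hc : ((∑ i, k.1 i : ℕ) : ℝ) ≤ (e + 1 : ℝ) * (k.1 (Fin.last e) : ℕ) := by
        push_cast
        exact_mod_cast hsum
      rw [inv_mul_le_iff₀ (by positivity : (0:ℝ) < (e + 1 : ℝ))]
      exact hc
    refine key.trans ?_
    show β ^ (∑ i, k.1 i) ≤ ∏ i, β ^ k.1 i
    rw [Finset.prod_pow_eq_pow_sum]
  · -- Truncated sum bound
    set T := {k : Fin (e + 1) → ℕ // ((∀ i, 0 < k i) ∧ StrictMono k) ∧ ∀ i, k i ≤ N} with hT
    have hfin : Finite T := by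
      refine Finite.of_injective (fun k : T => fun i : Fin (e + 1) =>
        (⟨k.1 i, by have := k.2.2 i; omega⟩ : Fin (N + 1))) ?_
      intro k k' h
      apply Subtype.ext
      funext i
      have := congrFun h i
      simpa using congrArg Fin.val this
    letI : Fintype T := Fintype.ofFinite T
    rw [tsum_fintype]
    calc ‖∑ k : T, ∏ i, x i ^ k.1 i / (k.1 i : ℂ) ^ a i‖
        ≤ ∑ k : T, ‖∏ i, x i ^ k.1 i / (k.1 i : ℂ) ^ a i‖ :=
          norm_sum_le _ _
      _ ≤ ∑ k : T, α ^ k.1 (Fin.last e) := by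
          refine Finset.sum_le_sum fun k _ => ?_
          exact term_bound a x α hα0.le hx k.1 k.2.1.1 k.2.1.2
      _ ≤ ∑ n ∈ Finset.Icc 1 N, (n : ℝ) ^ (e + 1 - 1) * α ^ n := ?_
    rw [← Finset.sum_fiberwise_of_maps_to
      (g := fun k : T => k.1 (Fin.last e)) (t := Finset.Icc 1 N)
      (fun k _ => Finset.mem_Icc.mpr ⟨k.2.1.1 _, k.2.2 _⟩)]
    refine Finset.sum_le_sum fun n hn => ?_
    obtain ⟨hn1, hnN⟩ := Finset.mem_Icc.mp hn
    have hconst : ∑ k ∈ Finset.univ.filter (fun k : T => k.1 (Fin.last e) = n),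
        α ^ k.1 (Fin.last e)
        = (Finset.univ.filter (fun k : T => k.1 (Fin.last e) = n)).card * α ^ n := by
      rw [Finset.sum_congr rfl (fun k hk => by
        rw [(Finset.mem_filter.mp hk).2]), Finset.sum_const, nsmul_eq_mul]
    rw [hconst]
    have hcard : (Finset.univ.filter (fun k : T => k.1 (Fin.last e) = n)).card ≤ n ^ e := by
      have := Finset.card_le_card_of_injOn
        (f := fun k : T => fun i : Fin e => k.1 i.castSucc - 1)
        (s := Finset.univ.filter (fun k : T => k.1 (Fin.last e) = n))
        (t := Fintype.piFinset (fun _ : Fin e => Finset.range n)) ?_ ?_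
      · rw [Fintype.card_piFinset] at this
        simpa using this
      · intro k hk
        rw [Finset.mem_coe, Fintype.mem_piFinset]
        intro i
        rw [Finset.mem_range]
        show k.1 i.castSucc - 1 < n
        have hlt : k.1 i.castSucc < k.1 (Fin.last e) := k.2.1.2 (Fin.castSucc_lt_last i)
        have heq : k.1 (Fin.last e) = n := (Finset.mem_filter.mp hk).2
        omega
      · intro k hk k' hk' h
        have heq : k.1 (Fin.last e) = n := (Finset.mem_filter.mp hk).2
        have heq' : k'.1 (Fin.last e) = n := (Finset.mem_filter.mp hk').2
        apply Subtype.ext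
        funext i
        refine Fin.lastCases ?_ ?_ i
        · rw [heq, heq']
        · intro j
          have hj : k.1 j.castSucc - 1 = k'.1 j.castSucc - 1 := congrFun h j
          have h1 : 0 < k.1 j.castSucc := k.2.1.1 _
          have h2 : 0 < k'.1 j.castSucc := k'.2.1.1 _
          omega
    calc ((Finset.univ.filter (fun k : T => k.1 (Fin.last e) = n)).card : ℝ) * α ^ n
        ≤ (n ^ e : ℕ) * α ^ n := by
          refine mul_le_mul_of_nonneg_right ?_ (pow_nonneg hα0.le _)
          exact_mod_cast hcard
      _ = (n : ℝ) ^ (e + 1 - 1) * α ^ n := by push_cast; norm_num
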